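/- Let s > 1 be real, set l = √(s² − 1), θ = π − arctan l, and α = π − 2·arctan l. Define f(z) = (l + z)/(l − z), g(z) = exp((π/θ)·Log z) − 1 (principal branch), and let x + iy = e^{iπα/θ} − 1 with x, y real, and ψ(z) = y·z/(x² + y² − x·z). Then the composition φ_s = ψ ∘ g ∘ f is a holomorphic bijection from the domain D_s = {z ∈ ℂ : Im z > 0 and |z − i| < s} onto the upper half-plane ℍ, with φ_s(0) = 0 and φ_s(i) = i. -/

import Mathlib

set_option maxHeartbeats 4000000

open Complex Real Set

private lemma aux_ne_zero_of_im_pos {z : ℂ} (h : 0 < z.im) : z ≠ 0 :=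
  fun h0 => by simp [h0] at h

private lemma aux_arg_pos_of_im_pos {z : ℂ} (h : 0 < z.im) : 0 < z.arg := by
  rcases lt_trichotomy 0 z.arg with h1|h1|h1
  · exact h1
  · exact absurd (Complex.arg_eq_zero_iff.mp h1.symm).2 h.ne'
  · exact absurd (Complex.arg_neg_iff.mp h1) (by linarith)

private lemma aux_sector_mem_iff {l s θ : ℝ} (hl : 0 < l) (hs : 0 < s)
    (hsin : Real.sin θ = l / s) (hcos : Real.cos θ = -(1/s))
    (hθ1 : π/2 < θ) (hθ2 : θ < π) (w : ℂ) :
    (0 < w.im ∧ 0 < l * w.re + w.im) ↔ (0 < w.arg ∧ w.arg < θ) := by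
  have hpi := Real.pi_pos
  have key : ∀ w : ℂ, 0 < w.im → (0 < l * w.re + w.im ↔ w.arg < θ) := by
    intro w him
    have hw0 : w ≠ 0 := aux_ne_zero_of_im_pos him
    have hA : 0 ≤ w.arg := Complex.arg_nonneg_iff.mpr him.le
    have hB : w.arg < π := Complex.arg_lt_pi_iff.mpr (Or.inr him.ne')
    set u := Complex.exp ((-θ:ℝ) * Complex.I) with hu_def
    have hu : u ≠ 0 := Complex.exp_ne_zero _
    have hau : u.arg = -θ := by
      rw [hu_def, Complex.exp_mul_I]
      exact Complex.arg_cos_add_sin_mul_I ⟨by linarith, by linarith⟩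
    have hmul : (w * u).arg = w.arg - θ := by
      have := Complex.arg_mul hw0 hu ⟨by rw [hau]; linarith, by rw [hau]; linarith⟩
      rw [this, hau]; ring
    have him2 : (w * u).im = -(l * w.re + w.im)/s := by
      have hre : u.re = Real.cos (-θ) := Complex.exp_ofReal_mul_I_re (-θ)
      have him' : u.im = Real.sin (-θ) := Complex.exp_ofReal_mul_I_im (-θ)
      rw [Complex.mul_im, hre, him', Real.cos_neg, Real.sin_neg, hsin, hcos]
      field_simp; try ring
    have h3 : (w * u).arg < 0 ↔ (w * u).im < 0 := Complex.arg_neg_iff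
    rw [hmul, him2] at h3
    have h4 : -(l * w.re + w.im)/s < 0 ↔ 0 < l * w.re + w.im := by
      rw [div_neg_iff]
      constructor
      · rintro (⟨a, b⟩ | ⟨a, b⟩) <;> linarith
      · intro h; right; exact ⟨by linarith, hs⟩
    rw [h4] at h3
    constructor
    · intro h; linarith [h3.mpr h]
    · intro h; exact h3.mp (by linarith)
  constructor
  · rintro ⟨h1, h2⟩
    exact ⟨aux_arg_pos_of_im_pos h1, (key w h1).mp h2⟩
  · rintro ⟨h1, h2⟩
    have him : 0 < w.im := by
      rcases lt_trichotomy 0 w.im with h|h|h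
      · exact h
      · exfalso
        rcases le_or_gt 0 w.re with h'|h'
        · exact absurd (Complex.arg_eq_zero_iff.mpr ⟨h', h.symm⟩) (by linarith)
        · exact absurd (Complex.arg_eq_pi_iff.mpr ⟨h', h.symm⟩) (by linarith)
      · exact absurd (Complex.arg_neg_iff.mpr h) (by linarith)
    exact ⟨him, (key w him).mpr h2⟩


theorem stmt_12 (s l θ α x y : ℝ) (hs : 1 < s)
    (hl : l = Real.sqrt (s ^ 2 - 1))
    (hθ : θ = Real.pi - Real.arctan l)
    (hα : α = Real.pi - 2 * Real.arctan l)
    (f g ψ : ℂ → ℂ)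
    (hf : ∀ z : ℂ, f z = ((l : ℂ) + z) / ((l : ℂ) - z))
    (hg : ∀ z : ℂ, g z =
      Complex.exp (((Real.pi / θ : ℝ) : ℂ) * Complex.log z) - 1)
    (hxy : (x : ℂ) + (y : ℂ) * Complex.I =
      Complex.exp (((Real.pi * α / θ : ℝ) : ℂ) * Complex.I) - 1)
    (hψ : ∀ z : ℂ, ψ z =
      (y : ℂ) * z / ((x : ℂ) ^ 2 + (y : ℂ) ^ 2 - (x : ℂ) * z)) :
    DifferentiableOn ℂ (ψ ∘ g ∘ f)
      {z : ℂ | 0 < z.im ∧ ‖z - Complex.I‖ < s} ∧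
    Set.BijOn (ψ ∘ g ∘ f)
      {z : ℂ | 0 < z.im ∧ ‖z - Complex.I‖ < s}
      {z : ℂ | 0 < z.im} ∧
    (ψ ∘ g ∘ f) 0 = 0 ∧ (ψ ∘ g ∘ f) Complex.I = Complex.I := by
  have hpi := Real.pi_pos
  have hs0 : (0:ℝ) < s := by linarith
  have hl0 : 0 < l := by rw [hl]; exact Real.sqrt_pos.mpr (by nlinarith)
  have hl2 : l^2 = s^2 - 1 := by rw [hl]; exact Real.sq_sqrt (by nlinarith)
  have hlne : (l:ℂ) ≠ 0 := by exact_mod_cast hl0.ne'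
  have ha0 : 0 < Real.arctan l := by rw [← Real.arctan_zero]; exact Real.arctan_strictMono hl0
  have ha2 : Real.arctan l < π/2 := Real.arctan_lt_pi_div_two l
  have hθ0 : 0 < θ := by rw [hθ]; linarith
  have hθπ : θ < π := by rw [hθ]; linarith
  have hθhalf : π/2 < θ := by rw [hθ]; linarith
  have hsqrt : Real.sqrt (1 + l^2) = s := by
    rw [show 1 + l^2 = s^2 by linarith]; exact Real.sqrt_sq hs0.le
  have hsinθ : Real.sin θ = l / s := by
    rw [hθ, Real.sin_pi_sub, Real.sin_arctan, hsqrt]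
  have hcosθ : Real.cos θ = -(1/s) := by
    rw [hθ, Real.cos_pi_sub, Real.cos_arctan, hsqrt]
  have hα0 : 0 < α := by rw [hα]; linarith
  have hαθ : α < θ := by rw [hα, hθ]; linarith
  have hαπ : α < π := by rw [hα]; linarith
  have hβ0 : 0 < π * α / θ := by positivity
  have hβπ : π * α / θ < π := by rw [div_lt_iff₀ hθ0]; nlinarith
  have hx : x = Real.cos (π * α / θ) - 1 := by
    have h := congrArg Complex.re hxy
    simp only [Complex.add_re, Complex.ofReal_re, Complex.mul_re, Complex.I_re, Complex.I_im,
      Complex.ofReal_im, Complex.sub_re, Complex.one_re, Complex.exp_ofReal_mul_I_re] at h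
    linarith
  have hy : y = Real.sin (π * α / θ) := by
    have h := congrArg Complex.im hxy
    simp only [Complex.add_im, Complex.ofReal_im, Complex.mul_im, Complex.I_re, Complex.I_im,
      Complex.ofReal_re, Complex.sub_im, Complex.one_im, Complex.exp_ofReal_mul_I_im] at h
    linarith
  have hy0 : 0 < y := by rw [hy]; exact Real.sin_pos_of_pos_of_lt_pi hβ0 hβπ
  have hyne : (y:ℂ) ≠ 0 := by exact_mod_cast hy0.ne'
  have hc0 : 0 < x^2 + y^2 := by nlinarith [sq_nonneg x]
  have hcC : ((x:ℂ)^2 + (y:ℂ)^2) = ((x^2 + y^2 : ℝ) : ℂ) := by push_cast; ring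
  have hcne : (((x^2 + y^2 : ℝ)):ℂ) ≠ 0 := by exact_mod_cast hc0.ne'
  have hp0 : 0 < π / θ := by positivity
  have hq0 : 0 < θ / π := by positivity
  have hqp : (θ / π) * (π / θ) = 1 := by field_simp
  have hpq : (π / θ) * (θ / π) = 1 := by field_simp
  have hpθ : (π / θ) * θ = π := by field_simp
  have hsec : ∀ w : ℂ, (0 < w.im ∧ 0 < l * w.re + w.im) ↔ (0 < w.arg ∧ w.arg < θ) :=
    fun w => aux_sector_mem_iff hl0 hs0 hsinθ hcosθ hθhalf hθπ w
  have hDmem : ∀ z : ℂ,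
      z ∈ {z : ℂ | 0 < z.im ∧ ‖z - Complex.I‖ < s} ↔
      (0 < z.im ∧ z.re^2 + z.im^2 - 2*z.im < l^2) := by
    intro z
    have habs : ‖z - Complex.I‖ < s ↔ Complex.normSq (z - Complex.I) < s^2 := by
      rw [← Complex.sq_norm]
      constructor <;> intro h <;> nlinarith [norm_nonneg (z - Complex.I)]
    have hns : Complex.normSq (z - Complex.I) = z.re^2 + (z.im - 1)^2 := by
      simp [Complex.normSq_apply]; ring
    constructor
    · rintro ⟨h1, h2⟩
      rw [habs, hns] at h2
      exact ⟨h1, by nlinarith⟩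
    · rintro ⟨h1, h2⟩
      refine ⟨h1, ?_⟩
      rw [habs, hns]
      nlinarith
  -- f facts
  have hfdenne : ∀ z : ℂ, 0 < z.im → (l:ℂ) - z ≠ 0 := by
    intro z hz h
    have h2 := congrArg Complex.im h
    simp only [Complex.sub_im, Complex.ofReal_im, Complex.zero_im, zero_sub, neg_eq_zero] at h2
    exact hz.ne' h2
  have hfim : ∀ z : ℂ, (((l:ℂ) + z) / ((l:ℂ) - z)).im
      = 2*l*z.im / ((l - z.re)^2 + z.im^2) := by
    intro z; rw [Complex.div_im, Complex.normSq_apply]; simp; ring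
  have hfre : ∀ z : ℂ, (((l:ℂ) + z) / ((l:ℂ) - z)).re
      = (l^2 - z.re^2 - z.im^2) / ((l - z.re)^2 + z.im^2) := by
    intro z; rw [Complex.div_re, Complex.normSq_apply]; simp; ring
  have hfD : Set.MapsTo (fun z => ((l:ℂ) + z) / ((l:ℂ) - z))
      {z : ℂ | 0 < z.im ∧ ‖z - Complex.I‖ < s}
      {w : ℂ | 0 < w.im ∧ 0 < l * w.re + w.im} := by
    intro z hz
    obtain ⟨h1, h2⟩ := (hDmem z).mp hz
    have hN : 0 < (l - z.re)^2 + z.im^2 := by nlinarith [sq_nonneg (l - z.re), pow_pos h1 2]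
    refine ⟨?_, ?_⟩
    · show 0 < (((l:ℂ) + z) / ((l:ℂ) - z)).im
      rw [hfim]; exact div_pos (by nlinarith) hN
    · show 0 < l * (((l:ℂ) + z) / ((l:ℂ) - z)).re + (((l:ℂ) + z) / ((l:ℂ) - z)).im
      rw [hfim, hfre]
      have e : l * ((l^2 - z.re^2 - z.im^2) / ((l - z.re)^2 + z.im^2))
          + 2*l*z.im / ((l - z.re)^2 + z.im^2)
          = l * (l^2 - (z.re^2 + z.im^2 - 2*z.im)) / ((l - z.re)^2 + z.im^2) := by ring
      rw [e]
      exact div_pos (mul_pos hl0 (by nlinarith)) hN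
  have hfinvim : ∀ w : ℂ, ((l:ℂ)*(w-1)/(w+1)).im = 2*l*w.im / ((w.re + 1)^2 + w.im^2) := by
    intro w; rw [Complex.div_im, Complex.normSq_apply]; simp; ring
  have hfinvre : ∀ w : ℂ, ((l:ℂ)*(w-1)/(w+1)).re
      = l*(w.re^2 + w.im^2 - 1) / ((w.re + 1)^2 + w.im^2) := by
    intro w; rw [Complex.div_re, Complex.normSq_apply]; simp; ring
  have hfinvD : Set.MapsTo (fun w => (l:ℂ)*(w-1)/(w+1))
      {w : ℂ | 0 < w.im ∧ 0 < l * w.re + w.im}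
      {z : ℂ | 0 < z.im ∧ ‖z - Complex.I‖ < s} := by
    intro w hw
    obtain ⟨h1, h2⟩ := hw
    have hN : 0 < (w.re + 1)^2 + w.im^2 := by nlinarith [sq_nonneg (w.re + 1), pow_pos h1 2]
    rw [hDmem]
    constructor
    · show 0 < ((l:ℂ)*(w-1)/(w+1)).im
      rw [hfinvim]; exact div_pos (by nlinarith) hN
    · show (((l:ℂ)*(w-1)/(w+1)).re)^2 + (((l:ℂ)*(w-1)/(w+1)).im)^2
        - 2*((l:ℂ)*(w-1)/(w+1)).im < l^2
      rw [hfinvim, hfinvre]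
      have key : (l*(w.re^2 + w.im^2 - 1) / ((w.re + 1)^2 + w.im^2))^2
          + (2*l*w.im / ((w.re + 1)^2 + w.im^2))^2
          - 2*(2*l*w.im / ((w.re + 1)^2 + w.im^2)) - l^2
          = -(4*l*(l*w.re + w.im))/((w.re + 1)^2 + w.im^2) := by
        field_simp
        ring
      have hlt : -(4*l*(l*w.re + w.im))/((w.re + 1)^2 + w.im^2) < 0 :=
        div_neg_of_neg_of_pos (by nlinarith) hN
      nlinarith [key, hlt]
  have hfleft : ∀ z ∈ {z : ℂ | 0 < z.im ∧ ‖z - Complex.I‖ < s},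
      (l:ℂ)*((((l:ℂ) + z) / ((l:ℂ) - z))-1)/((((l:ℂ) + z) / ((l:ℂ) - z))+1) = z := by
    intro z hz
    have hd := hfdenne z hz.1
    have e1 : ((l:ℂ)+z)/((l:ℂ)-z) - 1 = 2*z/((l:ℂ)-z) := by field_simp; try ring
    have e2 : ((l:ℂ)+z)/((l:ℂ)-z) + 1 = 2*(l:ℂ)/((l:ℂ)-z) := by field_simp; try ring
    rw [e1, e2]
    field_simp
    try ring
  have hfright : ∀ w ∈ {w : ℂ | 0 < w.im ∧ 0 < l * w.re + w.im},
      ((l:ℂ) + ((l:ℂ)*(w-1)/(w+1)))/((l:ℂ) - ((l:ℂ)*(w-1)/(w+1))) = w := by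
    intro w hw
    have hd : w + 1 ≠ 0 := by
      intro h
      have h2 := congrArg Complex.im h
      simp only [Complex.add_im, Complex.one_im, Complex.zero_im, add_zero] at h2
      exact hw.1.ne' h2
    have e1 : (l:ℂ) + (l:ℂ)*(w-1)/(w+1) = 2*(l:ℂ)*w/(w+1) := by field_simp; try ring
    have e2 : (l:ℂ) - (l:ℂ)*(w-1)/(w+1) = 2*(l:ℂ)/(w+1) := by field_simp; try ring
    rw [e1, e2]
    field_simp
    try ring
  have hbijf : Set.BijOn (fun z => ((l:ℂ) + z) / ((l:ℂ) - z))
      {z : ℂ | 0 < z.im ∧ ‖z - Complex.I‖ < s}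
      {w : ℂ | 0 < w.im ∧ 0 < l * w.re + w.im} :=
    Set.InvOn.bijOn ⟨fun z hz => hfleft z hz, fun w hw => hfright w hw⟩ hfD hfinvD
  -- g part
  have hmulim : ∀ (r : ℝ) (u : ℂ), ((r:ℂ) * u).im = r * u.im := by
    intro r u; simp [Complex.mul_im]
  have hgim_bound : ∀ w : ℂ, 0 < w.arg → w.arg < θ →
      0 < (((π / θ:ℝ):ℂ) * Complex.log w).im ∧ (((π / θ:ℝ):ℂ) * Complex.log w).im < π := by
    intro w h1 h2
    rw [hmulim, Complex.log_im]
    refine ⟨mul_pos hp0 h1, ?_⟩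
    calc π/θ * w.arg < π/θ*θ := mul_lt_mul_of_pos_left h2 hp0
    _ = π := hpθ
  have hgS : Set.MapsTo (fun w => Complex.exp (((π / θ : ℝ):ℂ) * Complex.log w) - 1)
      {w : ℂ | 0 < w.im ∧ 0 < l * w.re + w.im} {z : ℂ | 0 < z.im} := by
    intro w hw
    obtain ⟨ha1, ha2⟩ := (hsec w).mp hw
    obtain ⟨hb1, hb2⟩ := hgim_bound w ha1 ha2
    show 0 < (Complex.exp (((π / θ : ℝ):ℂ) * Complex.log w) - 1).im
    rw [Complex.sub_im, Complex.one_im, sub_zero, Complex.exp_im]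
    exact mul_pos (Real.exp_pos _) (Real.sin_pos_of_pos_of_lt_pi hb1 hb2)
  have hginvS : Set.MapsTo (fun v => Complex.exp (((θ / π : ℝ):ℂ) * Complex.log (v+1)))
      {z : ℂ | 0 < z.im} {w : ℂ | 0 < w.im ∧ 0 < l * w.re + w.im} := by
    intro v hv
    have hv' : 0 < v.im := hv
    have hvp : 0 < (v+1).im := by simp [hv']
    have hargpos : 0 < (v+1).arg := aux_arg_pos_of_im_pos hvp
    have hargpi : (v+1).arg < π := Complex.arg_lt_pi_iff.mpr (Or.inr hvp.ne')
    have him : (((θ / π:ℝ):ℂ) * Complex.log (v+1)).im = (θ/π) * (v+1).arg := by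
      rw [hmulim, Complex.log_im]
    have hrange1 : 0 < (θ/π) * (v+1).arg := mul_pos hq0 hargpos
    have hrange2 : (θ/π) * (v+1).arg < θ := by
      calc (θ/π) * (v+1).arg < (θ/π) * π := mul_lt_mul_of_pos_left hargpi hq0
      _ = θ := by field_simp
    have harg : (Complex.exp (((θ / π:ℝ):ℂ) * Complex.log (v+1))).arg
        = (θ/π) * (v+1).arg := by
      rw [← Complex.log_im, Complex.log_exp (by rw [him]; linarith) (by rw [him]; linarith), him]
    exact (hsec _).mpr ⟨by rw [harg]; exact hrange1, by rw [harg]; exact hrange2⟩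
  have hgleft : ∀ w ∈ {w : ℂ | 0 < w.im ∧ 0 < l * w.re + w.im},
      Complex.exp (((θ/π:ℝ):ℂ) * Complex.log ((Complex.exp (((π/θ:ℝ):ℂ) * Complex.log w) - 1) + 1)) = w := by
    intro w hw
    obtain ⟨ha1, ha2⟩ := (hsec w).mp hw
    have hw0 : w ≠ 0 := aux_ne_zero_of_im_pos hw.1
    obtain ⟨hb1, hb2⟩ := hgim_bound w ha1 ha2
    rw [sub_add_cancel, Complex.log_exp (by linarith) (by linarith),
        ← mul_assoc, ← Complex.ofReal_mul, hqp, Complex.ofReal_one, one_mul,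
        Complex.exp_log hw0]
  have hgright : ∀ v ∈ {z : ℂ | 0 < z.im},
      Complex.exp (((π/θ:ℝ):ℂ) * Complex.log (Complex.exp (((θ/π:ℝ):ℂ) * Complex.log (v+1)))) - 1 = v := by
    intro v hv
    have hv' : 0 < v.im := hv
    have hvp : 0 < (v+1).im := by simp [hv']
    have hargpos : 0 < (v+1).arg := aux_arg_pos_of_im_pos hvp
    have hargpi : (v+1).arg < π := Complex.arg_lt_pi_iff.mpr (Or.inr hvp.ne')
    have him : (((θ/π:ℝ):ℂ) * Complex.log (v+1)).im = (θ/π) * (v+1).arg := by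
      rw [hmulim, Complex.log_im]
    have h1 : 0 < (θ/π) * (v+1).arg := mul_pos hq0 hargpos
    have h2 : (θ/π) * (v+1).arg < θ := by
      calc (θ/π)*(v+1).arg < (θ/π)*π := mul_lt_mul_of_pos_left hargpi hq0
      _ = θ := by field_simp
    rw [Complex.log_exp (by rw [him]; linarith) (by rw [him]; linarith [hθπ]),
        ← mul_assoc, ← Complex.ofReal_mul, hpq, Complex.ofReal_one, one_mul,
        Complex.exp_log (aux_ne_zero_of_im_pos hvp)]
    ring
  have hbijg : Set.BijOn (fun w => Complex.exp (((π/θ:ℝ):ℂ) * Complex.log w) - 1)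
      {w : ℂ | 0 < w.im ∧ 0 < l * w.re + w.im} {z : ℂ | 0 < z.im} :=
    Set.InvOn.bijOn ⟨fun w hw => hgleft w hw, fun v hv => hgright v hv⟩ hgS hginvS
  -- psi part
  set C : ℂ := ((x^2+y^2:ℝ):ℂ) with hC_def
  have hCre : C.re = x^2+y^2 := by rw [hC_def, Complex.ofReal_re]
  have hCim : C.im = 0 := by rw [hC_def, Complex.ofReal_im]
  have hCne : C ≠ 0 := by rw [hC_def]; exact hcne
  have hψdenne : ∀ z : ℂ, 0 < z.im → C - (x:ℂ)*z ≠ 0 := by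
    intro z hz h
    have h1 := congrArg Complex.im h
    simp only [Complex.sub_im, hCim, Complex.mul_im, Complex.ofReal_im, Complex.ofReal_re,
      Complex.zero_im, zero_mul, add_zero, zero_sub, neg_eq_zero, mul_zero] at h1
    have hx0 : x = 0 := by
      rcases mul_eq_zero.mp h1 with h'|h'
      · exact h'
      · exact absurd h' hz.ne'
    have h2 := congrArg Complex.re h
    simp only [Complex.sub_re, hCre, Complex.mul_re, Complex.ofReal_re, Complex.ofReal_im,
      Complex.zero_re, zero_mul, sub_zero, mul_zero] at h2
    rw [hx0] at h2
    nlinarith [hy0]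
  have hψinvdenne : ∀ w : ℂ, 0 < w.im → (y:ℂ) + (x:ℂ)*w ≠ 0 := by
    intro w hw h
    have h1 := congrArg Complex.im h
    simp only [Complex.add_im, Complex.ofReal_im, Complex.mul_im, Complex.ofReal_re,
      Complex.zero_im, zero_mul, add_zero, zero_add, mul_zero] at h1
    have hx0 : x = 0 := by
      rcases mul_eq_zero.mp h1 with h'|h'
      · exact h'
      · exact absurd h' hw.ne'
    have h2 := congrArg Complex.re h
    simp only [Complex.add_re, Complex.ofReal_re, Complex.mul_re, Complex.ofReal_im,
      Complex.zero_re, zero_mul, sub_zero, mul_zero] at h2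
    rw [hx0] at h2
    nlinarith [hy0]
  have hψim : ∀ z : ℂ, ((y:ℂ)*z/(C - (x:ℂ)*z)).im
      = y*(x^2+y^2)*z.im / ((x^2+y^2 - x*z.re)^2 + (x*z.im)^2) := by
    intro z
    rw [Complex.div_im, Complex.normSq_apply]
    simp only [Complex.sub_re, Complex.sub_im, Complex.mul_re, Complex.mul_im, hCre, hCim,
      Complex.ofReal_re, Complex.ofReal_im, zero_mul, mul_zero, sub_zero, zero_sub, add_zero,
      zero_add]
    ring
  have hψinvim : ∀ w : ℂ, (C*w/((y:ℂ)+(x:ℂ)*w)).im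
      = (x^2+y^2)*y*w.im / ((y + x*w.re)^2 + (x*w.im)^2) := by
    intro w
    rw [Complex.div_im, Complex.normSq_apply]
    simp only [Complex.add_re, Complex.add_im, Complex.mul_re, Complex.mul_im, hCre, hCim,
      Complex.ofReal_re, Complex.ofReal_im, zero_mul, mul_zero, sub_zero, zero_sub, add_zero,
      zero_add]
    ring
  have hNψ : ∀ z : ℂ, 0 < z.im → 0 < (x^2+y^2 - x*z.re)^2 + (x*z.im)^2 := by
    intro z hz
    rcases eq_or_ne x 0 with h|h
    · rw [h]; ring_nf; nlinarith [pow_pos hy0 4]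
    · have h5 : x*z.im ≠ 0 := mul_ne_zero h hz.ne'
      have h6 : 0 < (x*z.im)^2 := lt_of_le_of_ne (sq_nonneg _) (Ne.symm (pow_ne_zero 2 h5))
      nlinarith [sq_nonneg (x^2+y^2 - x*z.re)]
  have hNψinv : ∀ w : ℂ, 0 < w.im → 0 < (y + x*w.re)^2 + (x*w.im)^2 := by
    intro w hw
    rcases eq_or_ne x 0 with h|h
    · rw [h]; ring_nf; nlinarith [pow_pos hy0 2]
    · have h5 : x*w.im ≠ 0 := mul_ne_zero h hw.ne'
      have h6 : 0 < (x*w.im)^2 := lt_of_le_of_ne (sq_nonneg _) (Ne.symm (pow_ne_zero 2 h5))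
      nlinarith [sq_nonneg (y + x*w.re)]
  have hψH : Set.MapsTo (fun z => (y:ℂ)*z/(C - (x:ℂ)*z))
      {z : ℂ | 0 < z.im} {z : ℂ | 0 < z.im} := by
    intro z hz
    have hz' : 0 < z.im := hz
    show 0 < ((y:ℂ)*z/(C - (x:ℂ)*z)).im
    rw [hψim]
    exact div_pos (mul_pos (mul_pos hy0 hc0) hz') (hNψ z hz')
  have hψinvH : Set.MapsTo (fun w => C*w/((y:ℂ)+(x:ℂ)*w))
      {z : ℂ | 0 < z.im} {z : ℂ | 0 < z.im} := by
    intro w hw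
    have hw' : 0 < w.im := hw
    show 0 < (C*w/((y:ℂ)+(x:ℂ)*w)).im
    rw [hψinvim]
    exact div_pos (mul_pos (mul_pos hc0 hy0) hw') (hNψinv w hw')
  have hψleft : ∀ z ∈ {z : ℂ | 0 < z.im},
      C*((y:ℂ)*z/(C - (x:ℂ)*z))/((y:ℂ)+(x:ℂ)*((y:ℂ)*z/(C - (x:ℂ)*z))) = z := by
    intro z hz
    have hz' : 0 < z.im := hz
    have hd := hψdenne z hz'
    have e1 : (y:ℂ) + (x:ℂ)*((y:ℂ)*z/(C - (x:ℂ)*z)) = (y:ℂ)*C/(C - (x:ℂ)*z) := by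
      field_simp; try ring
    rw [e1]
    rw [div_eq_iff (div_ne_zero (mul_ne_zero hyne hCne) hd)]
    ring
  have hψright : ∀ w ∈ {z : ℂ | 0 < z.im},
      (y:ℂ)*(C*w/((y:ℂ)+(x:ℂ)*w))/(C - (x:ℂ)*(C*w/((y:ℂ)+(x:ℂ)*w))) = w := by
    intro w hw
    have hw' : 0 < w.im := hw
    have hd := hψinvdenne w hw'
    have e1 : C - (x:ℂ)*(C*w/((y:ℂ)+(x:ℂ)*w)) = (y:ℂ)*C/((y:ℂ)+(x:ℂ)*w) := by
      field_simp; try ring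
    rw [e1]
    rw [div_eq_iff (div_ne_zero (mul_ne_zero hyne hCne) hd)]
    ring
  have hbijψ : Set.BijOn (fun z => (y:ℂ)*z/(C - (x:ℂ)*z))
      {z : ℂ | 0 < z.im} {z : ℂ | 0 < z.im} :=
    Set.InvOn.bijOn ⟨fun z hz => hψleft z hz, fun w hw => hψright w hw⟩ hψH hψinvH
  -- assembly
  have hcomp : ψ ∘ g ∘ f = (fun z => (y:ℂ)*z/(C - (x:ℂ)*z))
      ∘ (fun w => Complex.exp (((π/θ:ℝ):ℂ) * Complex.log w) - 1)
      ∘ (fun z => ((l:ℂ)+z)/((l:ℂ)-z)) := by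
    funext z
    simp only [Function.comp_apply, hf, hg, hψ, hC_def, hcC]
  refine ⟨?_, ?_, ?_, ?_⟩
  · -- differentiability
    rw [hcomp]
    intro z hz
    apply DifferentiableAt.differentiableWithinAt
    have h1 : DifferentiableAt ℂ (fun z : ℂ => ((l:ℂ)+z)/((l:ℂ)-z)) z :=
      DifferentiableAt.div (by fun_prop) (by fun_prop) (hfdenne z hz.1)
    have hw : (((l:ℂ)+z)/((l:ℂ)-z)) ∈ {w : ℂ | 0 < w.im ∧ 0 < l * w.re + w.im} := hfD hz
    have h2 : DifferentiableAt ℂ (fun w : ℂ => Complex.exp (((π/θ:ℝ):ℂ) * Complex.log w) - 1)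
        (((l:ℂ)+z)/((l:ℂ)-z)) := by
      apply DifferentiableAt.sub_const
      apply DifferentiableAt.cexp
      apply DifferentiableAt.const_mul
      exact Complex.differentiableAt_log (Complex.mem_slitPlane_iff.mpr (Or.inr hw.1.ne'))
    have hv : (Complex.exp (((π/θ:ℝ):ℂ) * Complex.log (((l:ℂ)+z)/((l:ℂ)-z))) - 1)
        ∈ {z : ℂ | 0 < z.im} := hgS hw
    have h3 : DifferentiableAt ℂ (fun u : ℂ => (y:ℂ)*u/(C - (x:ℂ)*u))
        (Complex.exp (((π/θ:ℝ):ℂ) * Complex.log (((l:ℂ)+z)/((l:ℂ)-z))) - 1) :=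
      DifferentiableAt.div (by fun_prop) (by fun_prop) (hψdenne _ hv)
    exact h3.comp z (h2.comp z h1)
  · -- bijection
    rw [hcomp]
    exact hbijψ.comp (hbijg.comp hbijf)
  · -- value at 0
    rw [hcomp]
    simp only [Function.comp_apply]
    have hf0 : ((l:ℂ)+0)/((l:ℂ)-0) = 1 := by rw [add_zero, sub_zero, div_self hlne]
    rw [hf0, Complex.log_one, mul_zero, Complex.exp_zero, sub_self]
    simp
  · -- value at i
    rw [hcomp]
    simp only [Function.comp_apply]
    have hcosα : Real.cos α = (s^2-2)/s^2 := by
      rw [hα, Real.cos_pi_sub, Real.cos_two_mul, Real.cos_arctan, hsqrt]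
      field_simp
      try ring
    have hsinα : Real.sin α = 2*l/s^2 := by
      rw [hα, Real.sin_pi_sub, Real.sin_two_mul, Real.sin_arctan, Real.cos_arctan, hsqrt]
      field_simp
    have hdI : (l:ℂ) - Complex.I ≠ 0 := by
      intro h
      have h1 := congrArg Complex.im h
      simp at h1
    have hfI : ((l:ℂ)+Complex.I)/((l:ℂ)-Complex.I) = Complex.exp ((α:ℝ) * Complex.I) := by
      rw [div_eq_iff hdI, Complex.exp_mul_I, ← Complex.ofReal_cos, ← Complex.ofReal_sin,
        hcosα, hsinα]
      apply Complex.ext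
      · simp only [Complex.add_re, Complex.ofReal_re, Complex.I_re, Complex.mul_re,
          Complex.add_im, Complex.ofReal_im, Complex.I_im, Complex.mul_im,
          Complex.sub_re, Complex.sub_im]
        field_simp
        ring
      · simp only [Complex.add_re, Complex.ofReal_re, Complex.I_re, Complex.mul_re,
          Complex.add_im, Complex.ofReal_im, Complex.I_im, Complex.mul_im,
          Complex.sub_re, Complex.sub_im]
        field_simp
        nlinarith [hl2]
    rw [hfI]
    have hlog : Complex.log (Complex.exp ((α:ℝ) * Complex.I)) = (α:ℝ) * Complex.I := by
      apply Complex.log_exp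
      · simp; linarith
      · simp; linarith
    have hθC : (θ:ℂ) ≠ 0 := by exact_mod_cast hθ0.ne'
    have hexp2 : ((π/θ:ℝ):ℂ) * ((α:ℝ) * Complex.I) = ((π*α/θ:ℝ):ℂ) * Complex.I := by
      push_cast
      field_simp
      try ring
    rw [hlog, hexp2, ← hxy]
    have hdd : C - (x:ℂ)*((x:ℂ)+(y:ℂ)*Complex.I) ≠ 0 := by
      intro h
      have h1 := congrArg Complex.re h
      simp only [Complex.sub_re, hCre, Complex.ofReal_re, Complex.mul_re, Complex.add_re,
        Complex.add_im, Complex.ofReal_im, Complex.mul_im, Complex.I_re, Complex.I_im,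
        Complex.zero_re] at h1
      nlinarith [hy0]
    rw [div_eq_iff hdd]
    apply Complex.ext
    · simp only [Complex.mul_re, Complex.mul_im, Complex.add_re, Complex.add_im,
        Complex.sub_re, Complex.sub_im, Complex.ofReal_re, Complex.ofReal_im, hCre, hCim,
        Complex.I_re, Complex.I_im]
      ring
    · simp only [Complex.mul_re, Complex.mul_im, Complex.add_re, Complex.add_im,
        Complex.sub_re, Complex.sub_im, Complex.ofReal_re, Complex.ofReal_im, hCre, hCim,
        Complex.I_re, Complex.I_im]
      ring
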